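/- Fix S, T ⊆ [n] with |S| = |T|. The set P_n(S,T) is in bijection with the set of bijections f from [n]\T to [n]\S satisfying i < f(i) for all i ∈ [n]\T (good matchings): a partition P corresponds to the map sending each left-hand endpoint of an arc of the standard representation of P to its right-hand endpoint. -/

import Mathlib

open Finset
open scoped Classical

/-- descents of a list: number of positions i with l_i > l_{i+1} -/
def desList (l : List ℕ) : ℕ := ((l.zip l.tail).filter (fun p => p.2 < p.1)).length

/-- major index of a list (1-based positions) -/
def majList (l : List ℕ) : ℕ :=
  ∑ i ∈ Finset.range (l.length - 1), if l.getD (i+1) 0 < l.getD i 0 then i + 1 else 0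

/-- inversion number of a list -/
def invList (l : List ℕ) : ℕ :=
  ((Finset.range l.length ×ˢ Finset.range l.length).filter
    (fun p => p.1 < p.2 ∧ l.getD p.2 0 < l.getD p.1 0)).card

/-- number of 2-crossings of an arc set -/
def cr2 {α : Type*} [LinearOrder α] (A : Finset (α × α)) : ℕ :=
  ((A ×ˢ A).filter (fun p => p.1.1 < p.2.1 ∧ p.2.1 < p.1.2 ∧ p.1.2 < p.2.2)).card

/-- the label of an arc: arcs are labeled 1,…,k from right to left by left-hand endpoints -/
def labelArc {α : Type*} [LinearOrder α] (A : Finset (α × α)) (e : α × α) : ℕ :=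
  (A.filter (fun f => e.1 < f.1)).card + 1

/-- p-major index of an arc set: process endpoints in decreasing order, maintaining the
sequence σ of (arcs corresponding to) labels; at a left endpoint delete its arc, at a
right endpoint prepend the arc ending there and add the number of descents of the
label sequence σ. -/
noncomputable def pmajArcs {α : Type*} [LinearOrder α] (A : Finset (α × α)) : ℕ :=
  (((((A.image Prod.fst) ∪ (A.image Prod.snd)).sort (· ≤ ·)).reverse).foldl
    (fun (st : List (α × α) × ℕ) i =>
      let σ₁ := st.1.filter (fun e => e.1 ≠ i)
      let ends := (A.filter (fun e => e.2 = i)).toList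
      let σ₂ := ends ++ σ₁
      (σ₂, st.2 + if ends.isEmpty then 0 else desList (σ₂.map (labelArc A))))
    ([], 0)).2

/-- arcs of the standard representation of a partition of [n] = {1,…,n}:
pairs of consecutive elements of a block -/
noncomputable def arcsOf {n : ℕ} (P : Finpartition (Finset.Icc 1 n)) : Finset (ℕ × ℕ) :=
  ((Finset.Icc 1 n) ×ˢ (Finset.Icc 1 n)).filter (fun e =>
    e.1 < e.2 ∧ ∃ B ∈ P.parts, e.1 ∈ B ∧ e.2 ∈ B ∧ ∀ k ∈ B, e.1 < k → k < e.2 → False)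

/-- the set of minimal block elements of a partition of [n] -/
noncomputable def minsetOf {n : ℕ} (P : Finpartition (Finset.Icc 1 n)) : Finset ℕ :=
  (Finset.Icc 1 n).filter (fun i => ∃ B ∈ P.parts, i ∈ B ∧ ∀ j ∈ B, i ≤ j)

/-- the set of maximal block elements of a partition of [n] -/
noncomputable def maxsetOf {n : ℕ} (P : Finpartition (Finset.Icc 1 n)) : Finset ℕ :=
  (Finset.Icc 1 n).filter (fun i => ∃ B ∈ P.parts, i ∈ B ∧ ∀ j ∈ B, j ≤ i)

noncomputable instance finpartitionFintype (s : Finset ℕ) : Fintype (Finpartition s) := by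
  apply Fintype.ofInjective
    (fun P : Finpartition s =>
      (⟨P.parts, by
        simp only [Finset.mem_powerset]
        intro t ht
        exact Finset.mem_powerset.2 (P.le ht)⟩ : {t // t ∈ s.powerset.powerset}))
  intro P Q h
  have : P.parts = Q.parts := congrArg Subtype.val h
  cases P; cases Q; simpa using this

/-- P_n(S,T): partitions of [n] with block minima S and block maxima T -/
noncomputable def pnST (n : ℕ) (S T : Finset ℕ) : Finset (Finpartition (Finset.Icc 1 n)) :=
  Finset.univ.filter (fun P => minsetOf P = S ∧ maxsetOf P = T)

/-- h(i) = |T ∩ {i+1,…,n}| − |S ∩ {i+1,…,n}| -/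
def hST (n : ℕ) (S T : Finset ℕ) (i : ℕ) : ℕ :=
  (T ∩ Finset.Icc (i+1) n).card - (S ∩ Finset.Icc (i+1) n).card

section Arcs

variable {n : ℕ} {P : Finpartition (Finset.Icc 1 n)}

lemma mem_arcsOf {i j : ℕ} :
    (i, j) ∈ arcsOf P ↔ i ∈ Finset.Icc 1 n ∧ j ∈ Finset.Icc 1 n ∧ i < j ∧
      ∃ B ∈ P.parts, i ∈ B ∧ j ∈ B ∧ ∀ k ∈ B, i < k → k < j → False := by
  simp [arcsOf, Finset.mem_filter, Finset.mem_product, and_assoc]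

lemma partn_exists_mem {i : ℕ} (hi : i ∈ Finset.Icc 1 n) : ∃ B ∈ P.parts, i ∈ B := by
  have : i ∈ P.parts.sup id := by rw [P.sup_parts]; exact hi
  rwa [Finset.mem_sup] at this

lemma arc_right_unique {i j j' : ℕ} (h : (i, j) ∈ arcsOf P) (h' : (i, j') ∈ arcsOf P) :
    j = j' := by
  rw [mem_arcsOf] at h h'
  obtain ⟨-, -, hij, B, hB, hiB, hjB, hbet⟩ := h
  obtain ⟨-, -, hij', B', hB', hiB', hjB', hbet'⟩ := h'
  have hBB : B = B' := P.eq_of_mem_parts hB hB' hiB hiB'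
  subst hBB
  rcases lt_trichotomy j j' with h1 | h1 | h1
  · exact absurd (hbet' j hjB hij h1) not_false
  · exact h1
  · exact absurd (hbet j' hjB' hij' h1) not_false

lemma arc_left_unique {i i' j : ℕ} (h : (i, j) ∈ arcsOf P) (h' : (i', j) ∈ arcsOf P) :
    i = i' := by
  rw [mem_arcsOf] at h h'
  obtain ⟨-, -, hij, B, hB, hiB, hjB, hbet⟩ := h
  obtain ⟨-, -, hij', B', hB', hiB', hjB', hbet'⟩ := h'
  have hBB : B = B' := P.eq_of_mem_parts hB hB' hjB hjB'
  subst hBB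
  rcases lt_trichotomy i i' with h1 | h1 | h1
  · exact absurd (hbet i' hiB' h1 hij') not_false
  · exact h1
  · exact absurd (hbet' i hiB h1 hij) not_false

lemma arc_fst_not_max {i j : ℕ} (h : (i, j) ∈ arcsOf P) : i ∉ maxsetOf P := by
  rw [mem_arcsOf] at h
  obtain ⟨hiI, -, hij, B, hB, hiB, hjB, -⟩ := h
  simp only [maxsetOf, Finset.mem_filter, not_and]
  rintro - ⟨C, hC, hiC, hmax⟩
  have : C = B := P.eq_of_mem_parts hC hB hiC hiB
  subst this
  exact absurd (hmax j hjB) (not_le.2 hij)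

lemma arc_snd_not_min {i j : ℕ} (h : (i, j) ∈ arcsOf P) : j ∉ minsetOf P := by
  rw [mem_arcsOf] at h
  obtain ⟨-, hjI, hij, B, hB, hiB, hjB, -⟩ := h
  simp only [minsetOf, Finset.mem_filter, not_and]
  rintro - ⟨C, hC, hjC, hmin⟩
  have : C = B := P.eq_of_mem_parts hC hB hjC hjB
  subst this
  exact absurd (hmin i hiB) (not_le.2 hij)

lemma max_no_arc {i : ℕ} (h : i ∈ maxsetOf P) : ¬ ∃ j, (i, j) ∈ arcsOf P := by
  rintro ⟨j, hj⟩; exact arc_fst_not_max hj h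

lemma notIcc_no_arc {i : ℕ} (h : i ∉ Finset.Icc 1 n) : ¬ ∃ j, (i, j) ∈ arcsOf P := by
  rintro ⟨j, hj⟩; exact h (mem_arcsOf.1 hj).1

lemma arc_exists {i : ℕ} (hiI : i ∈ Finset.Icc 1 n) (him : i ∉ maxsetOf P) :
    ∃ j, (i, j) ∈ arcsOf P := by
  obtain ⟨B, hB, hiB⟩ := partn_exists_mem (P := P) hiI
  have hex : ∃ x ∈ B, i < x := by
    by_contra hcon
    push_neg at hcon
    exact him (by
      simp only [maxsetOf, Finset.mem_filter]
      exact ⟨hiI, B, hB, hiB, fun j hj => (hcon j hj)⟩)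
  have hne : (B.filter (fun x => i < x)).Nonempty := by
    obtain ⟨x, hx, hix⟩ := hex
    exact ⟨x, Finset.mem_filter.2 ⟨hx, hix⟩⟩
  set j := (B.filter (fun x => i < x)).min' hne with hjdef
  have hjmem : j ∈ B.filter (fun x => i < x) := Finset.min'_mem _ hne
  rw [Finset.mem_filter] at hjmem
  refine ⟨j, mem_arcsOf.2 ⟨hiI, P.le hB hjmem.1, hjmem.2, B, hB, hiB, hjmem.1, ?_⟩⟩
  intro k hk hik hkj
  have : j ≤ k := Finset.min'_le (B.filter (fun x => i < x)) k (Finset.mem_filter.2 ⟨hk, hik⟩)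
  omega

lemma arc_exists_left {j : ℕ} (hjI : j ∈ Finset.Icc 1 n) (hjm : j ∉ minsetOf P) :
    ∃ i, (i, j) ∈ arcsOf P := by
  obtain ⟨B, hB, hjB⟩ := partn_exists_mem (P := P) hjI
  have hex : ∃ x ∈ B, x < j := by
    by_contra hcon
    push_neg at hcon
    exact hjm (by
      simp only [minsetOf, Finset.mem_filter]
      exact ⟨hjI, B, hB, hjB, fun k hk => (hcon k hk)⟩)
  have hne : (B.filter (fun x => x < j)).Nonempty := by
    obtain ⟨x, hx, hxj⟩ := hex
    exact ⟨x, Finset.mem_filter.2 ⟨hx, hxj⟩⟩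
  set i := (B.filter (fun x => x < j)).max' hne with hidef
  have himem : i ∈ B.filter (fun x => x < j) := Finset.max'_mem _ hne
  rw [Finset.mem_filter] at himem
  refine ⟨i, mem_arcsOf.2 ⟨P.le hB himem.1, hjI, himem.2, B, hB, himem.1, hjB, ?_⟩⟩
  intro k hk hik hkj
  have : k ≤ i := Finset.le_max' (B.filter (fun x => x < j)) k (Finset.mem_filter.2 ⟨hk, hkj⟩)
  omega

end Arcs

noncomputable def stdF {n : ℕ} (P : Finpartition (Finset.Icc 1 n)) : ℕ → ℕ :=
  fun i => if h : ∃ j, (i, j) ∈ arcsOf P then h.choose else i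

section StdF

variable {n : ℕ} {P : Finpartition (Finset.Icc 1 n)}

lemma stdF_arc_of_exists {i : ℕ} (h : ∃ j, (i, j) ∈ arcsOf P) :
    (i, stdF P i) ∈ arcsOf P := by
  rw [stdF, dif_pos h]; exact h.choose_spec

lemma stdF_eq_of_arc {i j : ℕ} (h : (i, j) ∈ arcsOf P) : stdF P i = j :=
  arc_right_unique (stdF_arc_of_exists ⟨j, h⟩) h

lemma stdF_id_of_no_arc {i : ℕ} (h : ¬ ∃ j, (i, j) ∈ arcsOf P) : stdF P i = i := by
  rw [stdF, dif_neg h]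

end StdF

section Good

variable {n : ℕ} {S T : Finset ℕ} {f : ℕ → ℕ}

lemma good_le
    (hlt : ∀ i ∈ Finset.Icc 1 n \ T, i < f i)
    (hid : ∀ i, i ∉ Finset.Icc 1 n \ T → f i = i) (i : ℕ) : i ≤ f i := by
  by_cases h : i ∈ Finset.Icc 1 n \ T
  · exact (hlt i h).le
  · rw [hid i h]

lemma good_le_iter
    (hlt : ∀ i ∈ Finset.Icc 1 n \ T, i < f i)
    (hid : ∀ i, i ∉ Finset.Icc 1 n \ T → f i = i) (k i : ℕ) : i ≤ f^[k] i := by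
  induction k generalizing i with
  | zero => simp
  | succ k ih =>
    rw [Function.iterate_succ_apply]
    exact le_trans (good_le hlt hid i) (ih (f i))

lemma good_maps_Icc
    (hS : S ⊆ Finset.Icc 1 n)
    (hbij : Set.BijOn f (↑(Finset.Icc 1 n \ T)) (↑(Finset.Icc 1 n \ S)))
    (hid : ∀ i, i ∉ Finset.Icc 1 n \ T → f i = i)
    {i : ℕ} (hi : i ∈ Finset.Icc 1 n) : f i ∈ Finset.Icc 1 n := by
  by_cases h : i ∈ Finset.Icc 1 n \ T
  · have := hbij.1 (Finset.mem_coe.2 h)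
    rw [Finset.mem_coe, Finset.mem_sdiff] at this
    exact this.1
  · rw [hid i h]; exact hi

lemma good_iter_mem
    (hS : S ⊆ Finset.Icc 1 n)
    (hbij : Set.BijOn f (↑(Finset.Icc 1 n \ T)) (↑(Finset.Icc 1 n \ S)))
    (hid : ∀ i, i ∉ Finset.Icc 1 n \ T → f i = i)
    (k : ℕ) {i : ℕ} (hi : i ∈ Finset.Icc 1 n) : f^[k] i ∈ Finset.Icc 1 n := by
  induction k generalizing i with
  | zero => simpa using hi
  | succ k ih =>
    rw [Function.iterate_succ_apply]
    exact ih (good_maps_Icc hS hbij hid hi)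

lemma good_fixT
    (hid : ∀ i, i ∉ Finset.Icc 1 n \ T → f i = i) {t : ℕ} (ht : t ∈ T) : f t = t :=
  hid t (by simp [Finset.mem_sdiff, ht])

lemma good_iter_fixT
    (hid : ∀ i, i ∉ Finset.Icc 1 n \ T → f i = i) (k : ℕ) {t : ℕ} (ht : t ∈ T) :
    f^[k] t = t := by
  induction k with
  | zero => simp
  | succ k ih => rw [Function.iterate_succ_apply, good_fixT hid ht, ih]

lemma good_reachT
    (hS : S ⊆ Finset.Icc 1 n)
    (hbij : Set.BijOn f (↑(Finset.Icc 1 n \ T)) (↑(Finset.Icc 1 n \ S)))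
    (hlt : ∀ i ∈ Finset.Icc 1 n \ T, i < f i)
    (hid : ∀ i, i ∉ Finset.Icc 1 n \ T → f i = i) :
    ∀ (m : ℕ) {i : ℕ}, i ∈ Finset.Icc 1 n → n - i ≤ m → f^[m] i ∈ T := by
  intro m
  induction m with
  | zero =>
    intro i hi hni
    rw [Finset.mem_Icc] at hi
    by_contra hiT
    have hmem : i ∈ Finset.Icc 1 n \ T :=
      Finset.mem_sdiff.2 ⟨Finset.mem_Icc.2 hi, hiT⟩
    have h1 := hlt i hmem
    have h2 := good_maps_Icc hS hbij hid (Finset.mem_Icc.2 hi)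
    rw [Finset.mem_Icc] at h2
    simp only [Function.iterate_zero_apply] at *
    omega
  | succ m ih =>
    intro i hi hni
    by_cases hiT : i ∈ T
    · rw [good_iter_fixT hid _ hiT]; exact hiT
    · have hmem : i ∈ Finset.Icc 1 n \ T := Finset.mem_sdiff.2 ⟨hi, hiT⟩
      rw [Function.iterate_succ_apply]
      have h1 := hlt i hmem
      have h2 := good_maps_Icc hS hbij hid hi
      have h2' := h2
      rw [Finset.mem_Icc] at h2' hi
      exact ih h2 (by omega)

lemma good_top_mem_T
    (hS : S ⊆ Finset.Icc 1 n)
    (hbij : Set.BijOn f (↑(Finset.Icc 1 n \ T)) (↑(Finset.Icc 1 n \ S)))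
    (hlt : ∀ i ∈ Finset.Icc 1 n \ T, i < f i)
    (hid : ∀ i, i ∉ Finset.Icc 1 n \ T → f i = i)
    {i : ℕ} (hi : i ∈ Finset.Icc 1 n) : f^[n] i ∈ T :=
  good_reachT hS hbij hlt hid n hi (by omega)

lemma good_top_f
    (hS : S ⊆ Finset.Icc 1 n)
    (hbij : Set.BijOn f (↑(Finset.Icc 1 n \ T)) (↑(Finset.Icc 1 n \ S)))
    (hlt : ∀ i ∈ Finset.Icc 1 n \ T, i < f i)
    (hid : ∀ i, i ∉ Finset.Icc 1 n \ T → f i = i)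
    {i : ℕ} (hi : i ∈ Finset.Icc 1 n) : f^[n] (f i) = f^[n] i := by
  rw [← Function.iterate_succ_apply, Function.iterate_succ_apply']
  exact good_fixT hid (good_top_mem_T hS hbij hlt hid hi)

lemma good_top_iter
    (hS : S ⊆ Finset.Icc 1 n)
    (hbij : Set.BijOn f (↑(Finset.Icc 1 n \ T)) (↑(Finset.Icc 1 n \ S)))
    (hlt : ∀ i ∈ Finset.Icc 1 n \ T, i < f i)
    (hid : ∀ i, i ∉ Finset.Icc 1 n \ T → f i = i)
    (k : ℕ) {i : ℕ} (hi : i ∈ Finset.Icc 1 n) : f^[n] (f^[k] i) = f^[n] i := by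
  induction k generalizing i with
  | zero => simp
  | succ k ih =>
    rw [Function.iterate_succ_apply, ih (good_maps_Icc hS hbij hid hi),
      good_top_f hS hbij hlt hid hi]

lemma good_top_T_fix
    (hid : ∀ i, i ∉ Finset.Icc 1 n \ T → f i = i) {t : ℕ} (ht : t ∈ T) : f^[n] t = t :=
  good_iter_fixT hid n ht

lemma good_pull
    (hbij : Set.BijOn f (↑(Finset.Icc 1 n \ T)) (↑(Finset.Icc 1 n \ S)))
    (hid : ∀ i, i ∉ Finset.Icc 1 n \ T → f i = i)
    (hS : S ⊆ Finset.Icc 1 n) :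
    ∀ (m : ℕ) {x j : ℕ}, x ∈ Finset.Icc 1 n → j ∈ Finset.Icc 1 n \ T → f^[m] x = f j →
      (∃ k, f^[k] x = j) ∨ (∃ k, f^[k] j = x) := by
  intro m
  induction m with
  | zero =>
    intro x j hx hj heq
    simp only [Function.iterate_zero_apply] at heq
    exact Or.inr ⟨1, by simp [heq]⟩
  | succ m ih =>
    intro x j hx hj heq
    rw [Function.iterate_succ_apply'] at heq
    set d := f^[m] x with hd
    have hdI : d ∈ Finset.Icc 1 n := good_iter_mem hS hbij hid m hx
    by_cases hdT : d ∈ Finset.Icc 1 n \ T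
    · have : d = j := hbij.2.1 (Finset.mem_coe.2 hdT) (Finset.mem_coe.2 hj) heq
      exact Or.inl ⟨m, this⟩
    · have hfix : f d = d := hid d hdT
      rw [hfix] at heq
      exact ih hx hj heq

lemma good_comparable
    (hS : S ⊆ Finset.Icc 1 n)
    (hbij : Set.BijOn f (↑(Finset.Icc 1 n \ T)) (↑(Finset.Icc 1 n \ S)))
    (hlt : ∀ i ∈ Finset.Icc 1 n \ T, i < f i)
    (hid : ∀ i, i ∉ Finset.Icc 1 n \ T → f i = i) :
    ∀ (d i j : ℕ), i ∈ Finset.Icc 1 n → j ∈ Finset.Icc 1 n →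
      (n - i) + (n - j) ≤ d → f^[n] i = f^[n] j →
      (∃ k, f^[k] i = j) ∨ (∃ k, f^[k] j = i) := by
  intro d
  induction d with
  | zero =>
    intro i j hi hj hm htop
    by_cases hiT : i ∈ T
    · exact Or.inr ⟨n, by rw [← htop, good_top_T_fix hid hiT]⟩
    · exfalso
      have hmem : i ∈ Finset.Icc 1 n \ T := Finset.mem_sdiff.2 ⟨hi, hiT⟩
      have h1 := hlt i hmem
      have h2 := good_maps_Icc hS hbij hid hi
      rw [Finset.mem_Icc] at h2 hi
      omega
  | succ d ih =>
    intro i j hi hj hm htop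
    by_cases hiT : i ∈ T
    · exact Or.inr ⟨n, by rw [← htop, good_top_T_fix hid hiT]⟩
    by_cases hjT : j ∈ T
    · exact Or.inl ⟨n, by rw [htop, good_top_T_fix hid hjT]⟩
    have hmi : i ∈ Finset.Icc 1 n \ T := Finset.mem_sdiff.2 ⟨hi, hiT⟩
    have hmj : j ∈ Finset.Icc 1 n \ T := Finset.mem_sdiff.2 ⟨hj, hjT⟩
    have hfi : f i ∈ Finset.Icc 1 n := good_maps_Icc hS hbij hid hi
    have hfj : f j ∈ Finset.Icc 1 n := good_maps_Icc hS hbij hid hj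
    have h1 := hlt i hmi
    have h2 := hlt j hmj
    have hfi' := hfi; have hfj' := hfj
    rw [Finset.mem_Icc] at hfi' hfj'
    have htop' : f^[n] (f i) = f^[n] (f j) := by
      rw [good_top_f hS hbij hlt hid hi, good_top_f hS hbij hlt hid hj, htop]
    rcases ih (f i) (f j) hfi hfj (by omega) htop' with ⟨k, hk⟩ | ⟨k, hk⟩
    · rw [← Function.iterate_succ_apply] at hk
      exact good_pull hbij hid hS (k + 1) hi hmj hk
    · rw [← Function.iterate_succ_apply] at hk
      exact (good_pull hbij hid hS (k + 1) hj hmi hk).symm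

end Good

noncomputable def mkPart (n : ℕ) (f : ℕ → ℕ) : Finpartition (Finset.Icc 1 n) where
  parts := (Finset.Icc 1 n).image
    (fun i => (Finset.Icc 1 n).filter (fun j => f^[n] j = f^[n] i))
  supIndep := by
    rw [Finset.supIndep_iff_pairwiseDisjoint]
    intro B hB C hC hne
    rw [Finset.mem_coe, Finset.mem_image] at hB hC
    obtain ⟨i, hi, rfl⟩ := hB
    obtain ⟨j, hj, rfl⟩ := hC
    simp only [Function.onFun, id]
    rw [Finset.disjoint_left]
    intro x hx1 hx2
    rw [Finset.mem_filter] at hx1 hx2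
    refine hne ?_
    ext y
    simp only [Finset.mem_filter]
    rw [← hx1.2, ← hx2.2]
  sup_parts := by
    apply le_antisymm
    · apply Finset.sup_le
      intro B hB
      rw [Finset.mem_image] at hB
      obtain ⟨i, hi, rfl⟩ := hB
      exact Finset.filter_subset _ _
    · intro i hi
      have hmem : (Finset.Icc 1 n).filter (fun j => f^[n] j = f^[n] i) ∈
          (Finset.Icc 1 n).image
            (fun i => (Finset.Icc 1 n).filter (fun j => f^[n] j = f^[n] i)) :=
        Finset.mem_image_of_mem _ hi
      exact (Finset.le_sup (f := id) hmem) (Finset.mem_filter.2 ⟨hi, rfl⟩)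
  bot_notMem := by
    simp only [Finset.bot_eq_empty, Finset.mem_image]
    rintro ⟨i, hi, h⟩
    have : i ∈ (Finset.Icc 1 n).filter (fun j => f^[n] j = f^[n] i) :=
      Finset.mem_filter.2 ⟨hi, rfl⟩
    rw [h] at this
    exact absurd this (Finset.notMem_empty i)

lemma mem_mkPart_parts {n : ℕ} {f : ℕ → ℕ} {B : Finset ℕ} :
    B ∈ (mkPart n f).parts ↔
      ∃ i ∈ Finset.Icc 1 n, B = (Finset.Icc 1 n).filter (fun j => f^[n] j = f^[n] i) := by
  simp only [mkPart, Finset.mem_image]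
  constructor
  · rintro ⟨i, hi, rfl⟩; exact ⟨i, hi, rfl⟩
  · rintro ⟨i, hi, rfl⟩; exact ⟨i, hi, rfl⟩

section MkGood

variable {n : ℕ} {S T : Finset ℕ} {f : ℕ → ℕ}

lemma mkPart_maxset
    (hS : S ⊆ Finset.Icc 1 n) (hT : T ⊆ Finset.Icc 1 n)
    (hbij : Set.BijOn f (↑(Finset.Icc 1 n \ T)) (↑(Finset.Icc 1 n \ S)))
    (hlt : ∀ i ∈ Finset.Icc 1 n \ T, i < f i)
    (hid : ∀ i, i ∉ Finset.Icc 1 n \ T → f i = i) :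
    maxsetOf (mkPart n f) = T := by
  ext i
  simp only [maxsetOf, Finset.mem_filter]
  constructor
  · rintro ⟨hiI, B, hB, hiB, hmax⟩
    rw [mem_mkPart_parts] at hB
    obtain ⟨a, ha, rfl⟩ := hB
    rw [Finset.mem_filter] at hiB
    set t := f^[n] i with htdef
    have htT : t ∈ T := good_top_mem_T hS hbij hlt hid hiI
    have htB : t ∈ (Finset.Icc 1 n).filter (fun j => f^[n] j = f^[n] a) := by
      rw [Finset.mem_filter]
      refine ⟨hT htT, ?_⟩
      rw [good_top_T_fix hid htT, ← hiB.2]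
    have h1 : t ≤ i := hmax t htB
    have h2 : i ≤ t := good_le_iter hlt hid n i
    have : i = t := le_antisymm h2 h1
    rwa [this]
  · intro hiT
    have hiI : i ∈ Finset.Icc 1 n := hT hiT
    refine ⟨hiI, (Finset.Icc 1 n).filter (fun j => f^[n] j = f^[n] i),
      mem_mkPart_parts.2 ⟨i, hiI, rfl⟩, Finset.mem_filter.2 ⟨hiI, rfl⟩, ?_⟩
    intro j hj
    rw [Finset.mem_filter] at hj
    calc j ≤ f^[n] j := good_le_iter hlt hid n j
    _ = f^[n] i := hj.2
    _ = i := good_top_T_fix hid hiT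

lemma good_S_le
    (hbij : Set.BijOn f (↑(Finset.Icc 1 n \ T)) (↑(Finset.Icc 1 n \ S)))
    (hid : ∀ i, i ∉ Finset.Icc 1 n \ T → f i = i)
    (hS : S ⊆ Finset.Icc 1 n)
    {i : ℕ} (hiS : i ∈ S) :
    ∀ (k : ℕ) {j : ℕ}, j ∈ Finset.Icc 1 n → f^[k] j = i → i ≤ j := by
  intro k
  induction k with
  | zero => intro j hj h; simp only [Function.iterate_zero_apply] at h; omega
  | succ k ih =>
    intro j hj h
    rw [Function.iterate_succ_apply'] at h
    set b := f^[k] j with hb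
    have hbI : b ∈ Finset.Icc 1 n := good_iter_mem hS hbij hid k hj
    by_cases hbT : b ∈ Finset.Icc 1 n \ T
    · exfalso
      have := hbij.1 (Finset.mem_coe.2 hbT)
      rw [h] at this
      rw [Finset.mem_coe, Finset.mem_sdiff] at this
      exact this.2 hiS
    · rw [hid b hbT] at h
      exact ih hj h

lemma mkPart_minset
    (hS : S ⊆ Finset.Icc 1 n) (hT : T ⊆ Finset.Icc 1 n)
    (hbij : Set.BijOn f (↑(Finset.Icc 1 n \ T)) (↑(Finset.Icc 1 n \ S)))
    (hlt : ∀ i ∈ Finset.Icc 1 n \ T, i < f i)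
    (hid : ∀ i, i ∉ Finset.Icc 1 n \ T → f i = i) :
    minsetOf (mkPart n f) = S := by
  ext i
  simp only [minsetOf, Finset.mem_filter]
  constructor
  · rintro ⟨hiI, B, hB, hiB, hmin⟩
    by_contra hiS
    have hmem : i ∈ (↑(Finset.Icc 1 n \ S) : Set ℕ) := by
      rw [Finset.mem_coe, Finset.mem_sdiff]; exact ⟨hiI, hiS⟩
    obtain ⟨a, ha, hfa⟩ := hbij.2.2 hmem
    rw [Finset.mem_coe] at ha
    have haI : a ∈ Finset.Icc 1 n := (Finset.mem_sdiff.1 ha).1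
    have hai : a < i := hfa ▸ hlt a ha
    rw [mem_mkPart_parts] at hB
    obtain ⟨c, hc, rfl⟩ := hB
    rw [Finset.mem_filter] at hiB
    have haB : a ∈ (Finset.Icc 1 n).filter (fun j => f^[n] j = f^[n] c) := by
      rw [Finset.mem_filter]
      refine ⟨haI, ?_⟩
      rw [← good_top_f hS hbij hlt hid haI, hfa]
      exact hiB.2
    have := hmin a haB
    omega
  · intro hiS
    have hiI : i ∈ Finset.Icc 1 n := hS hiS
    refine ⟨hiI, (Finset.Icc 1 n).filter (fun j => f^[n] j = f^[n] i),
      mem_mkPart_parts.2 ⟨i, hiI, rfl⟩, Finset.mem_filter.2 ⟨hiI, rfl⟩, ?_⟩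
    intro j hj
    rw [Finset.mem_filter] at hj
    rcases good_comparable hS hbij hlt hid ((n - i) + (n - j)) i j hiI hj.1 le_rfl
        hj.2.symm with ⟨k, hk⟩ | ⟨k, hk⟩
    · have := good_le_iter hlt hid k i
      omega
    · exact good_S_le hbij hid hS hiS k hj.1 hk

end MkGood

section MkArcs

variable {n : ℕ} {S T : Finset ℕ} {f : ℕ → ℕ}

lemma mkPart_arc
    (hS : S ⊆ Finset.Icc 1 n) (hT : T ⊆ Finset.Icc 1 n)
    (hbij : Set.BijOn f (↑(Finset.Icc 1 n \ T)) (↑(Finset.Icc 1 n \ S)))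
    (hlt : ∀ i ∈ Finset.Icc 1 n \ T, i < f i)
    (hid : ∀ i, i ∉ Finset.Icc 1 n \ T → f i = i)
    {i : ℕ} (hi : i ∈ Finset.Icc 1 n \ T) :
    (i, f i) ∈ arcsOf (mkPart n f) := by
  have hiI : i ∈ Finset.Icc 1 n := (Finset.mem_sdiff.1 hi).1
  have hfiI : f i ∈ Finset.Icc 1 n := good_maps_Icc hS hbij hid hiI
  refine mem_arcsOf.2 ⟨hiI, hfiI, hlt i hi,
    (Finset.Icc 1 n).filter (fun j => f^[n] j = f^[n] i),
    mem_mkPart_parts.2 ⟨i, hiI, rfl⟩, Finset.mem_filter.2 ⟨hiI, rfl⟩,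
    Finset.mem_filter.2 ⟨hfiI, good_top_f hS hbij hlt hid hiI⟩, ?_⟩
  intro k hk hik hkfi
  rw [Finset.mem_filter] at hk
  rcases good_comparable hS hbij hlt hid ((n - i) + (n - k)) i k hiI hk.1 le_rfl
      hk.2.symm with ⟨m, hm⟩ | ⟨m, hm⟩
  · match m with
    | 0 => simp only [Function.iterate_zero_apply] at hm; omega
    | m + 1 =>
      rw [Function.iterate_succ_apply] at hm
      have := good_le_iter hlt hid m (f i)
      omega
  · have := good_le_iter hlt hid m k
    omega

lemma stdF_mkPart
    (hS : S ⊆ Finset.Icc 1 n) (hT : T ⊆ Finset.Icc 1 n)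
    (hbij : Set.BijOn f (↑(Finset.Icc 1 n \ T)) (↑(Finset.Icc 1 n \ S)))
    (hlt : ∀ i ∈ Finset.Icc 1 n \ T, i < f i)
    (hid : ∀ i, i ∉ Finset.Icc 1 n \ T → f i = i) :
    stdF (mkPart n f) = f := by
  funext i
  by_cases hi : i ∈ Finset.Icc 1 n \ T
  · exact stdF_eq_of_arc (mkPart_arc hS hT hbij hlt hid hi)
  · rw [hid i hi]
    by_cases hiI : i ∈ Finset.Icc 1 n
    · have hiT : i ∈ T := by
        rw [Finset.mem_sdiff] at hi; push_neg at hi; exact hi hiI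
      have : i ∈ maxsetOf (mkPart n f) := by
        rw [mkPart_maxset hS hT hbij hlt hid]; exact hiT
      exact stdF_id_of_no_arc (max_no_arc this)
    · exact stdF_id_of_no_arc (notIcc_no_arc hiI)

end MkArcs

section StdGood

variable {n : ℕ} {S T : Finset ℕ} {P : Finpartition (Finset.Icc 1 n)}

lemma stdF_good (hmin : minsetOf P = S) (hmax : maxsetOf P = T) :
    Set.BijOn (stdF P) (↑(Finset.Icc 1 n \ T)) (↑(Finset.Icc 1 n \ S)) ∧
    (∀ i ∈ Finset.Icc 1 n \ T, i < stdF P i) ∧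
    (∀ i, i ∉ Finset.Icc 1 n \ T → stdF P i = i) := by
  have harc : ∀ i ∈ Finset.Icc 1 n \ T, (i, stdF P i) ∈ arcsOf P := by
    intro i hi
    rw [Finset.mem_sdiff, ← hmax] at hi
    exact stdF_arc_of_exists (arc_exists hi.1 hi.2)
  have hid : ∀ i, i ∉ Finset.Icc 1 n \ T → stdF P i = i := by
    intro i hi
    rw [Finset.mem_sdiff, ← hmax] at hi
    push_neg at hi
    by_cases hiI : i ∈ Finset.Icc 1 n
    · exact stdF_id_of_no_arc (max_no_arc (hi hiI))
    · exact stdF_id_of_no_arc (notIcc_no_arc hiI)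
  refine ⟨⟨?_, ?_, ?_⟩, fun i hi => (mem_arcsOf.1 (harc i hi)).2.2.1, hid⟩
  · intro i hi
    rw [Finset.mem_coe] at hi
    have h := mem_arcsOf.1 (harc i hi)
    rw [Finset.mem_coe, Finset.mem_sdiff, ← hmin]
    exact ⟨h.2.1, arc_snd_not_min (harc i hi)⟩
  · intro x hx y hy hxy
    rw [Finset.mem_coe] at hx hy
    exact arc_left_unique (harc x hx) (hxy ▸ harc y hy)
  · intro j hj
    rw [Finset.mem_coe, Finset.mem_sdiff, ← hmin] at hj
    obtain ⟨i, hij⟩ := arc_exists_left hj.1 hj.2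
    have h := mem_arcsOf.1 hij
    refine ⟨i, ?_, stdF_eq_of_arc hij⟩
    rw [Finset.mem_coe, Finset.mem_sdiff, ← hmax]
    exact ⟨h.1, arc_fst_not_max hij⟩

end StdGood

section Back

variable {n : ℕ} {S T : Finset ℕ} {P : Finpartition (Finset.Icc 1 n)}

lemma stdF_iter_block :
    ∀ (k : ℕ) {i : ℕ}, i ∈ Finset.Icc 1 n →
      ∃ B ∈ P.parts, i ∈ B ∧ (stdF P)^[k] i ∈ B := by
  intro k
  induction k with
  | zero =>
    intro i hi
    obtain ⟨B, hB, hiB⟩ := partn_exists_mem (P := P) hi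
    exact ⟨B, hB, hiB, by simpa using hiB⟩
  | succ k ih =>
    intro i hi
    obtain ⟨B, hB, hiB, hkB⟩ := ih hi
    rw [Function.iterate_succ_apply']
    set y := (stdF P)^[k] i with hy
    by_cases hex : ∃ j, (y, j) ∈ arcsOf P
    · have harc := stdF_arc_of_exists hex
      have h := mem_arcsOf.1 harc
      obtain ⟨-, -, -, C, hC, hyC, hfC, -⟩ := h
      have : C = B := P.eq_of_mem_parts hC hB hyC hkB
      exact ⟨B, hB, hiB, this ▸ hfC⟩
    · rw [stdF_id_of_no_arc hex]
      exact ⟨B, hB, hiB, hkB⟩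

lemma fiber_eq_part
    (hS : S ⊆ Finset.Icc 1 n) (hT : T ⊆ Finset.Icc 1 n)
    (hmin : minsetOf P = S) (hmax : maxsetOf P = T)
    {B : Finset ℕ} {i : ℕ} (hB : B ∈ P.parts) (hiB : i ∈ B) :
    (Finset.Icc 1 n).filter (fun j => (stdF P)^[n] j = (stdF P)^[n] i) = B := by
  obtain ⟨hbij, hlt, hid⟩ := stdF_good hmin hmax
  set f := stdF P with hf
  have hiI : i ∈ Finset.Icc 1 n := P.le hB hiB
  have topmax : ∀ {x : ℕ}, x ∈ B → (∀ y ∈ B, y ≤ f^[n] x) ∧ f^[n] x ∈ B := by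
    intro x hxB
    have hxI : x ∈ Finset.Icc 1 n := P.le hB hxB
    obtain ⟨Bx, hBx, hxBx, htBx⟩ := stdF_iter_block (P := P) n hxI
    have hBxB : Bx = B := P.eq_of_mem_parts hBx hB hxBx hxB
    subst hBxB
    have htT : f^[n] x ∈ T := good_top_mem_T hS hbij hlt hid hxI
    rw [← hmax, maxsetOf, Finset.mem_filter] at htT
    obtain ⟨-, C, hC, htC, hmaxC⟩ := htT
    have : C = Bx := P.eq_of_mem_parts hC hBx htC htBx
    subst this
    exact ⟨hmaxC, htBx⟩
  ext x
  rw [Finset.mem_filter]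
  constructor
  · rintro ⟨hxI, htop⟩
    obtain ⟨Bx, hBx, hxBx, htBx⟩ := stdF_iter_block (P := P) n hxI
    have htiB : f^[n] i ∈ B := (topmax hiB).2
    rw [htop] at htBx
    have : Bx = B := P.eq_of_mem_parts hBx hB htBx htiB
    exact this ▸ hxBx
  · intro hxB
    refine ⟨P.le hB hxB, ?_⟩
    obtain ⟨hmx, hmemx⟩ := topmax hxB
    obtain ⟨hmi, hmemi⟩ := topmax hiB
    exact le_antisymm (hmi _ hmemx) (hmx _ hmemi)

lemma mkPart_stdF
    (hS : S ⊆ Finset.Icc 1 n) (hT : T ⊆ Finset.Icc 1 n)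
    (hmin : minsetOf P = S) (hmax : maxsetOf P = T) :
    mkPart n (stdF P) = P := by
  apply Finpartition.ext
  ext B
  rw [mem_mkPart_parts]
  constructor
  · rintro ⟨i, hiI, rfl⟩
    obtain ⟨B₀, hB₀, hiB₀⟩ := partn_exists_mem (P := P) hiI
    rw [fiber_eq_part hS hT hmin hmax hB₀ hiB₀]
    exact hB₀
  · intro hB
    obtain ⟨i, hiB⟩ := P.nonempty_of_mem_parts hB
    exact ⟨i, P.le hB hiB, (fiber_eq_part hS hT hmin hmax hB hiB).symm⟩

end Back

theorem pnST_bij_good_matchings (n : ℕ) (S T : Finset ℕ)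
    (hS : S ⊆ Finset.Icc 1 n) (hT : T ⊆ Finset.Icc 1 n) (hcard : S.card = T.card) :
    ∃ e : {P // P ∈ pnST n S T} ≃
        {f : ℕ → ℕ //
          Set.BijOn f (↑(Finset.Icc 1 n \ T) : Set ℕ) (↑(Finset.Icc 1 n \ S) : Set ℕ) ∧
          (∀ i ∈ Finset.Icc 1 n \ T, i < f i) ∧
          (∀ i, i ∉ Finset.Icc 1 n \ T → f i = i)},
      ∀ P : {P // P ∈ pnST n S T},
        ∀ i ∈ Finset.Icc 1 n \ T, (i, (e P).val i) ∈ arcsOf P.val := by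
  classical
  have hmem : ∀ P : Finpartition (Finset.Icc 1 n),
      P ∈ pnST n S T ↔ minsetOf P = S ∧ maxsetOf P = T := by
    intro P; simp [pnST]
  refine ⟨{
    toFun := fun P => ⟨stdF P.1, stdF_good ((hmem P.1).1 P.2).1 ((hmem P.1).1 P.2).2⟩
    invFun := fun f => ⟨mkPart n f.1, (hmem _).2
      ⟨mkPart_minset hS hT f.2.1 f.2.2.1 f.2.2.2,
       mkPart_maxset hS hT f.2.1 f.2.2.1 f.2.2.2⟩⟩
    left_inv := fun P => Subtype.ext
      (mkPart_stdF hS hT ((hmem P.1).1 P.2).1 ((hmem P.1).1 P.2).2)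
    right_inv := fun f => Subtype.ext (stdF_mkPart hS hT f.2.1 f.2.2.1 f.2.2.2) }, ?_⟩
  intro P i hi
  have h := (hmem P.1).1 P.2
  rw [Finset.mem_sdiff, ← h.2] at hi
  exact stdF_arc_of_exists (arc_exists hi.1 hi.2)
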